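/- (Claim (a) in the proof of the unimodality theorem.) Let α > 0, β > 0 and λ > 0. If y_BS > 0 is a critical point of the BS(α,β) density f_T, equivalently a''(y_BS;α,β) = a(y_BS;α,β) (a'(y_BS;α,β))², then the derivative of the skew-BS density at y_BS is strictly positive: f'(y_BS;α,β,λ) = 2λ a'(y_BS;α,β) φ(λ a(y_BS;α,β)) f_T(y_BS;α,β) > 0. -/

import Mathlib

open Real MeasureTheory Set

/-- Standard normal PDF. -/
noncomputable def stdPhi (x : ℝ) : ℝ := (Real.sqrt (2 * Real.pi))⁻¹ * Real.exp (-x ^ 2 / 2)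

/-- Standard normal CDF. -/
noncomputable def stdPhiCDF (x : ℝ) : ℝ := ∫ t in Set.Iic x, stdPhi t

/-- The function a(y; α, β). -/
noncomputable def aBS (α β y : ℝ) : ℝ := (1 / α) * (Real.sqrt (y / β) - Real.sqrt (β / y))

/-- The first derivative a'(y; α, β). -/
noncomputable def aBS' (α β y : ℝ) : ℝ :=
  (1 / (2 * α * y)) * (Real.sqrt (y / β) + Real.sqrt (β / y))

/-- The second derivative a''(y; α, β). -/
noncomputable def aBS'' (α β y : ℝ) : ℝ :=
  -(1 / (4 * α * y ^ 2)) * (Real.sqrt (y / β) + 3 * Real.sqrt (β / y))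

/-- The skew-BS(α, β, λ) density. -/
noncomputable def skewBSpdf (α β lam y : ℝ) : ℝ :=
  2 * stdPhi (aBS α β y) * stdPhiCDF (lam * aBS α β y) * aBS' α β y

/-- The BS(α, β) density. -/
noncomputable def bsPdf (α β y : ℝ) : ℝ := stdPhi (aBS α β y) * aBS' α β y

lemma stdPhi_pos (x : ℝ) : 0 < stdPhi x := by
  unfold stdPhi
  have h : (0:ℝ) < Real.sqrt (2 * Real.pi) := Real.sqrt_pos.2 (by positivity)
  positivity

lemma stdPhi_continuous : Continuous stdPhi := by
  unfold stdPhi; fun_prop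

lemma stdPhi_integrable : Integrable stdPhi := by
  have h := (integrable_exp_neg_mul_sq (show (0:ℝ) < 1/2 by norm_num)).const_mul
    (Real.sqrt (2 * Real.pi))⁻¹
  refine h.congr ?_
  filter_upwards with x
  unfold stdPhi
  ring_nf

lemma hasDerivAt_stdPhi (x : ℝ) : HasDerivAt stdPhi (-x * stdPhi x) x := by
  have h1 : HasDerivAt (fun t : ℝ => -t ^ 2 / 2) (-x) x := by
    have := ((hasDerivAt_pow 2 x).neg).div_const 2
    simpa using this.congr_deriv (by ring)
  have h2 := (h1.exp).const_mul (Real.sqrt (2 * Real.pi))⁻¹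
  refine h2.congr_deriv ?_
  unfold stdPhi; ring

lemma hasDerivAt_stdPhiCDF (x : ℝ) : HasDerivAt stdPhiCDF (stdPhi x) x := by
  have hfun : stdPhiCDF = fun u => (∫ t in Set.Iic (0:ℝ), stdPhi t) + ∫ t in (0:ℝ)..u, stdPhi t := by
    funext u
    rw [← intervalIntegral.integral_Iic_sub_Iic stdPhi_integrable.integrableOn
      stdPhi_integrable.integrableOn]
    unfold stdPhiCDF; ring
  rw [hfun]
  exact (intervalIntegral.integral_hasDerivAt_right
    (stdPhi_integrable.intervalIntegrable)
    (stdPhi_continuous.stronglyMeasurableAtFilter _ _)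
    stdPhi_continuous.continuousAt).const_add _

lemma hasDerivAt_aBS (α β yBS : ℝ) (hα : 0 < α) (hβ : 0 < β) (hyBS : 0 < yBS) :
    HasDerivAt (fun z => aBS α β z) (aBS' α β yBS) yBS := by
  have hs : Real.sqrt yBS ≠ 0 := ne_of_gt (Real.sqrt_pos.2 hyBS)
  have hb : Real.sqrt β ≠ 0 := ne_of_gt (Real.sqrt_pos.2 hβ)
  have hd : HasDerivAt (fun z : ℝ => (1/α) * (Real.sqrt z * (Real.sqrt β)⁻¹
      - Real.sqrt β * (Real.sqrt z)⁻¹))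
      ((1/α) * ((1 / (2 * Real.sqrt yBS)) * (Real.sqrt β)⁻¹
        - Real.sqrt β * (-(1 / (2 * Real.sqrt yBS)) / (Real.sqrt yBS) ^ 2))) yBS := by
    exact (((Real.hasDerivAt_sqrt (ne_of_gt hyBS)).mul_const _).sub
      (((Real.hasDerivAt_sqrt (ne_of_gt hyBS)).inv hs).const_mul _)).const_mul _
  have hev : (fun z => aBS α β z) =ᶠ[nhds yBS]
      (fun z : ℝ => (1/α) * (Real.sqrt z * (Real.sqrt β)⁻¹ - Real.sqrt β * (Real.sqrt z)⁻¹)) := by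
    filter_upwards [isOpen_Ioi.mem_nhds hyBS] with z hz
    unfold aBS
    rw [Real.sqrt_div (le_of_lt hz), Real.sqrt_div (le_of_lt hβ)]
    ring
  refine (hd.congr_of_eventuallyEq hev).congr_deriv ?_
  unfold aBS'
  rw [Real.sqrt_div (le_of_lt hyBS), Real.sqrt_div (le_of_lt hβ)]
  set s := Real.sqrt yBS with hsdef
  set b := Real.sqrt β with hbdef
  have h2 : s ^ 2 = yBS := Real.sq_sqrt (le_of_lt hyBS)
  have hb2 : b ^ 2 = β := Real.sq_sqrt (le_of_lt hβ)
  rw [← h2]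
  field_simp
  ring

lemma hasDerivAt_aBS' (α β yBS : ℝ) (hα : 0 < α) (hβ : 0 < β) (hyBS : 0 < yBS) :
    HasDerivAt (fun z => aBS' α β z) (aBS'' α β yBS) yBS := by
  have hs : Real.sqrt yBS ≠ 0 := ne_of_gt (Real.sqrt_pos.2 hyBS)
  have hb : Real.sqrt β ≠ 0 := ne_of_gt (Real.sqrt_pos.2 hβ)
  have hu : HasDerivAt (fun z : ℝ => Real.sqrt z * (Real.sqrt β)⁻¹
      + Real.sqrt β * (Real.sqrt z)⁻¹)
      ((1 / (2 * Real.sqrt yBS)) * (Real.sqrt β)⁻¹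
        + Real.sqrt β * (-(1 / (2 * Real.sqrt yBS)) / (Real.sqrt yBS) ^ 2)) yBS :=
    ((Real.hasDerivAt_sqrt (ne_of_gt hyBS)).mul_const _).add
      (((Real.hasDerivAt_sqrt (ne_of_gt hyBS)).inv hs).const_mul _)
  have hv : HasDerivAt (fun z : ℝ => z⁻¹) (-(1:ℝ) / yBS ^ 2) yBS := by
    exact (hasDerivAt_inv (ne_of_gt hyBS)).congr_deriv (by ring)
  have hd := ((hu.mul hv).const_mul (1 / (2*α)))
  have hev : (fun z => aBS' α β z) =ᶠ[nhds yBS]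
      (fun z : ℝ => (1/(2*α)) * ((Real.sqrt z * (Real.sqrt β)⁻¹ + Real.sqrt β * (Real.sqrt z)⁻¹) * z⁻¹)) := by
    filter_upwards [isOpen_Ioi.mem_nhds hyBS] with z hz
    unfold aBS'
    rw [Real.sqrt_div (le_of_lt hz), Real.sqrt_div (le_of_lt hβ)]
    field_simp
  refine (hd.congr_of_eventuallyEq hev).congr_deriv ?_
  unfold aBS''
  rw [Real.sqrt_div (le_of_lt hyBS), Real.sqrt_div (le_of_lt hβ)]
  set s := Real.sqrt yBS with hsdef
  set b := Real.sqrt β with hbdef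
  have h2 : s ^ 2 = yBS := Real.sq_sqrt (le_of_lt hyBS)
  have hb2 : b ^ 2 = β := Real.sq_sqrt (le_of_lt hβ)
  rw [← h2]
  field_simp
  ring

lemma aBS'_pos (α β yBS : ℝ) (hα : 0 < α) (hβ : 0 < β) (hyBS : 0 < yBS) :
    0 < aBS' α β yBS := by
  unfold aBS'
  have h1 : (0:ℝ) < Real.sqrt (yBS / β) := Real.sqrt_pos.2 (div_pos hyBS hβ)
  have h2 : (0:ℝ) ≤ Real.sqrt (β / yBS) := Real.sqrt_nonneg _
  positivity

/-- claim (a) in the unimodality proof: if λ > 0 and y_BS > 0 is a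
critical point of the BS density (a''(y_BS) = a(y_BS) a'(y_BS)²), then the derivative
of the skew-BS density at y_BS equals 2λ a'(y_BS) φ(λ a(y_BS)) f_T(y_BS) and is
strictly positive. -/
theorem skewBS_deriv_pos_at_BS_mode (α β lam yBS : ℝ) (hα : 0 < α) (hβ : 0 < β)
    (hlam : 0 < lam) (hyBS : 0 < yBS)
    (hcrit : aBS'' α β yBS = aBS α β yBS * (aBS' α β yBS) ^ 2) :
    deriv (fun z => skewBSpdf α β lam z) yBS
        = 2 * lam * aBS' α β yBS * stdPhi (lam * aBS α β yBS) * bsPdf α β yBS ∧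
      0 < deriv (fun z => skewBSpdf α β lam z) yBS := by
  set a := aBS α β yBS with ha
  set a1 := aBS' α β yBS with ha1
  set a2 := aBS'' α β yBS with ha2
  have H1 : HasDerivAt (fun z => aBS α β z) a1 yBS := hasDerivAt_aBS α β yBS hα hβ hyBS
  have H2 : HasDerivAt (fun z => aBS' α β z) a2 yBS := hasDerivAt_aBS' α β yBS hα hβ hyBS
  have Hp : HasDerivAt (fun z => stdPhi (aBS α β z)) (-a * stdPhi a * a1) yBS :=
    (hasDerivAt_stdPhi a).comp (h := fun z => aBS α β z) yBS H1
  have Hc : HasDerivAt (fun z => stdPhiCDF (lam * aBS α β z))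
      (stdPhi (lam * a) * (lam * a1)) yBS :=
    (hasDerivAt_stdPhiCDF (lam * a)).comp (h := fun z => lam * aBS α β z) yBS (H1.const_mul lam)
  have Hf : HasDerivAt (fun z => skewBSpdf α β lam z)
      (((2 * (-a * stdPhi a * a1)) * stdPhiCDF (lam * a)
        + (2 * stdPhi a) * (stdPhi (lam * a) * (lam * a1))) * a1
        + (2 * stdPhi a * stdPhiCDF (lam * a)) * a2) yBS := by
    have := ((Hp.const_mul 2).mul Hc).mul H2
    exact this.congr_deriv (by simp only [Pi.mul_apply]; rw [← ha, ← ha1])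
  have hDval : ((2 * (-a * stdPhi a * a1)) * stdPhiCDF (lam * a)
        + (2 * stdPhi a) * (stdPhi (lam * a) * (lam * a1))) * a1
        + (2 * stdPhi a * stdPhiCDF (lam * a)) * a2
      = 2 * lam * a1 * stdPhi (lam * a) * bsPdf α β yBS := by
    rw [hcrit]
    unfold bsPdf
    rw [← ha, ← ha1]
    ring
  have hD : deriv (fun z => skewBSpdf α β lam z) yBS
      = 2 * lam * a1 * stdPhi (lam * a) * bsPdf α β yBS := by
    rw [Hf.deriv, hDval]
  refine ⟨hD, ?_⟩
  rw [hD]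
  have hb : 0 < bsPdf α β yBS :=
    mul_pos (stdPhi_pos _) (aBS'_pos α β yBS hα hβ hyBS)
  have := aBS'_pos α β yBS hα hβ hyBS
  have := stdPhi_pos (lam * a)
  positivity
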